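/- Let 0 < α < 1 and λ > 0. For every t > 0, the function t ↦ t^{α−1} E_{α,α}(−λ t^α) is differentiable at t with derivative (d/dt)( t^{α−1} E_{α,α}(−λ t^α) ) = t^{α−2} E_{α,α−1}(−λ t^α). -/

import Mathlib

open Real Set

open Filter

lemma gamma_lower {s a : ℝ} (hs : 1 < s) (ha : 0 < a) :
    (s - 1) ^ a * Real.Gamma s ≤ Real.Gamma (s + a) := by
  have h0 : (0:ℝ) < s - 1 := by linarith
  have hΓ1 : 0 < Real.Gamma (s - 1) := Real.Gamma_pos_of_pos h0
  have hΓs : 0 < Real.Gamma s := Real.Gamma_pos_of_pos (by linarith)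
  have hΓsa : 0 < Real.Gamma (s + a) := Real.Gamma_pos_of_pos (by linarith)
  have hslope := Real.convexOn_log_Gamma.slope_mono_adjacent
    (x := s - 1) (y := s) (z := s + a)
    (by simpa using h0) (by simp; linarith) (by linarith) (by linarith)
  have hGs : Real.Gamma s = (s - 1) * Real.Gamma (s - 1) := by
    have := Real.Gamma_add_one (ne_of_gt h0)
    rw [sub_add_cancel] at this
    exact this
  have hlog : (Real.log ∘ Real.Gamma) s - (Real.log ∘ Real.Gamma) (s - 1) = Real.log (s - 1) := by
    simp only [Function.comp_apply, hGs, Real.log_mul (ne_of_gt h0) (ne_of_gt hΓ1)]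
    ring
  have h1 : a * Real.log (s - 1) + Real.log (Real.Gamma s) ≤ Real.log (Real.Gamma (s + a)) := by
    have hd1 : s - (s - 1) = 1 := by ring
    have hd2 : s + a - s = a := by ring
    rw [hd1, hd2, div_one, hlog] at hslope
    have := (le_div_iff₀ ha).mp hslope
    simp only [Function.comp_apply] at this
    linarith
  calc (s - 1) ^ a * Real.Gamma s
      = Real.exp (a * Real.log (s - 1)) * Real.exp (Real.log (Real.Gamma s)) := by
        rw [Real.rpow_def_of_pos h0, Real.exp_log hΓs, mul_comm (Real.log (s-1)) a]
    _ = Real.exp (a * Real.log (s - 1) + Real.log (Real.Gamma s)) := (Real.exp_add _ _).symm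
    _ ≤ Real.exp (Real.log (Real.Gamma (s + a))) := Real.exp_le_exp.mpr h1
    _ = Real.Gamma (s + a) := Real.exp_log hΓsa

lemma summable_aux {α : ℝ} (σ : ℝ) {q : ℝ} (hα0 : 0 < α) (hq : 0 ≤ q) :
    Summable (fun k : ℕ => (k + 1 : ℝ) * q ^ k / Real.Gamma (α * k + σ)) := by
  set M : ℝ := max 1 ((4 * q + 1) ^ α⁻¹) with hM
  have htend : Tendsto (fun k : ℕ => α * k + σ - 1) atTop atTop := by
    have h := tendsto_atTop_add_const_right atTop (σ - 1)
      (tendsto_natCast_atTop_atTop.const_mul_atTop hα0)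
    exact h.congr (fun k => by ring)
  apply summable_of_ratio_norm_eventually_le (r := 1/2) (by norm_num)
  filter_upwards [htend.eventually_ge_atTop M] with k hk
  set x : ℝ := α * k + σ with hx
  have hx1 : 1 < x := by
    have : (1:ℝ) ≤ M := le_max_left _ _
    have := le_trans this hk
    simp only [hx]; linarith
  have hΓx : 0 < Real.Gamma x := Real.Gamma_pos_of_pos (by linarith)
  have hΓxa : 0 < Real.Gamma (x + α) := Real.Gamma_pos_of_pos (by linarith)
  have hxk1 : α * (k + 1 : ℕ) + σ = x + α := by push_cast; ring
  have hG := gamma_lower hx1 hα0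
  have h4q : 4 * q ≤ (x - 1) ^ α := by
    have h1 : ((4 * q + 1) ^ α⁻¹ : ℝ) ≤ x - 1 := le_trans (le_max_right _ _) hk
    have h2 : (0:ℝ) ≤ (4 * q + 1) ^ α⁻¹ := Real.rpow_nonneg (by linarith) _
    have h3 := Real.rpow_le_rpow h2 h1 hα0.le
    rw [Real.rpow_inv_rpow (by linarith) (ne_of_gt hα0)] at h3
    linarith
  have hpow : (0:ℝ) < (x - 1) ^ α := Real.rpow_pos_of_pos (by linarith) _
  rw [hxk1, Real.norm_eq_abs, Real.norm_eq_abs,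
    abs_of_nonneg (by positivity), abs_of_nonneg (by positivity)]
  have key : ((k:ℝ) + 1 + 1) * q ^ (k + 1) * Real.Gamma x
      ≤ 1/2 * ((k + 1 : ℝ) * q ^ k) * Real.Gamma (x + α) := by
    calc ((k:ℝ) + 1 + 1) * q ^ (k + 1) * Real.Gamma x
        = (((k:ℝ) + 2) * q) * (q ^ k * Real.Gamma x) := by ring
      _ ≤ (1/2 * ((k:ℝ) + 1) * (x - 1) ^ α) * (q ^ k * Real.Gamma x) := by
          apply mul_le_mul_of_nonneg_right _ (by positivity)
          nlinarith [Nat.cast_nonneg (α := ℝ) k]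
      _ = 1/2 * ((k + 1 : ℝ) * q ^ k) * ((x - 1) ^ α * Real.Gamma x) := by ring
      _ ≤ 1/2 * ((k + 1 : ℝ) * q ^ k) * Real.Gamma (x + α) := by
          apply mul_le_mul_of_nonneg_left hG (by positivity)
  have h2 : (1:ℝ)/2 * ((k + 1 : ℝ) * q ^ k / Real.Gamma x)
      = (1/2 * ((k + 1 : ℝ) * q ^ k)) / Real.Gamma x := by ring
  push_cast
  rw [h2, div_le_div_iff₀ hΓxa hΓx]
  convert key using 1 <;> ring

/-- Two-parameter Mittag-Leffler function of a real argument; terms at poles of Γ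
are interpreted as 0 (in Lean, division by Γ = 0 gives 0). -/
noncomputable def mittagLeffler (α σ x : ℝ) : ℝ :=
  ∑' k : ℕ, x ^ k / Real.Gamma (α * (k : ℝ) + σ)

theorem hasDerivAt_rpow_mul_mittagLeffler (α lam t : ℝ) (hα0 : 0 < α) (hα1 : α < 1)
    (hlam : 0 < lam) (ht : 0 < t) :
    HasDerivAt (fun s : ℝ => s ^ (α - 1) * mittagLeffler α α (-lam * s ^ α))
      (t ^ (α - 2) * mittagLeffler α (α - 1) (-lam * t ^ α)) t := by
  set c : ℕ → ℝ := fun k => (-lam) ^ k / Real.Gamma (α * k + α) with hc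
  set g : ℕ → ℝ → ℝ := fun k s => c k * s ^ (α * k + α - 1) with hg
  set g' : ℕ → ℝ → ℝ := fun k x => c k * ((α * k + α - 1) * x ^ (α * k + α - 1 - 1)) with hg'
  have hΓpos : ∀ k : ℕ, 0 < Real.Gamma (α * k + α) := fun k =>
    Real.Gamma_pos_of_pos (by positivity)
  have hsplit : ∀ (s : ℝ), 0 < s → ∀ (k : ℕ) (e : ℝ),
      s ^ (α * k + e) = (s ^ α) ^ k * s ^ e := by
    intro s hs k e
    rw [← Real.rpow_natCast (s ^ α) k, ← Real.rpow_mul hs.le, ← Real.rpow_add hs, mul_comm α k]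
  have ha : 0 < t / 2 := by linarith
  have hb : 0 < t + 1 := by linarith
  set u : ℕ → ℝ := fun k => (t/2) ^ (α - 2) * ((k + 1 : ℝ) * (lam * (t/2) ^ α) ^ k
      / Real.Gamma (α * k + α)) + (t+1) ^ (α - 2) * ((k + 1 : ℝ) * (lam * (t+1) ^ α) ^ k
      / Real.Gamma (α * k + α)) with hu_def
  have hu : Summable u :=
    ((summable_aux α hα0 (by positivity)).mul_left _).add
      ((summable_aux α hα0 (by positivity)).mul_left _)
  have hopen : IsOpen (Ioo (t/2) (t+1)) := isOpen_Ioo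
  have hconn : IsPreconnected (Ioo (t/2) (t+1)) := (convex_Ioo _ _).isPreconnected
  have hmem : t ∈ Ioo (t/2) (t+1) := ⟨by linarith, by linarith⟩
  have hderiv : ∀ (k : ℕ) (y : ℝ), y ∈ Ioo (t/2) (t+1) → HasDerivAt (g k) (g' k y) y := by
    intro k y hy
    exact (Real.hasDerivAt_rpow_const (Or.inl (ne_of_gt (lt_trans ha hy.1)))).const_mul _
  have habs_c : ∀ k : ℕ, |c k| = lam ^ k / Real.Gamma (α * k + α) := by
    intro k
    rw [hc, abs_div, abs_pow, abs_neg, abs_of_nonneg hlam.le,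
      abs_of_nonneg (hΓpos k).le]
  have hcoef : ∀ k : ℕ, |α * k + α - 1| ≤ (k + 1 : ℝ) := by
    intro k
    rw [abs_le]
    refine ⟨by nlinarith [Nat.cast_nonneg (α := ℝ) k], by nlinarith [Nat.cast_nonneg (α := ℝ) k]⟩
  have hbound : ∀ (k : ℕ) (y : ℝ), y ∈ Ioo (t/2) (t+1) → ‖g' k y‖ ≤ u k := by
    intro k y hy
    have hy0 : 0 < y := lt_trans ha hy.1
    have he : α * k + α - 1 - 1 = α * k + (α - 2) := by ring
    have hpowle : y ^ (α * k + (α - 2)) ≤ (t/2) ^ (α * k + (α - 2)) + (t+1) ^ (α * k + (α - 2)) := by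
      rcases le_or_gt 0 (α * k + (α - 2)) with h | h
      · have h1 : y ^ (α * k + (α - 2)) ≤ (t+1) ^ (α * k + (α - 2)) :=
          Real.rpow_le_rpow hy0.le hy.2.le h
        have h2 : (0:ℝ) ≤ (t/2) ^ (α * k + (α - 2)) := Real.rpow_nonneg ha.le _
        linarith
      · have h1 : y ^ (α * k + (α - 2)) ≤ (t/2) ^ (α * k + (α - 2)) :=
          Real.rpow_le_rpow_of_nonpos ha hy.1.le h.le
        have h2 : (0:ℝ) ≤ (t+1) ^ (α * k + (α - 2)) := Real.rpow_nonneg hb.le _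
        linarith
    calc ‖g' k y‖ = |c k| * (|α * k + α - 1| * y ^ (α * k + (α - 2))) := by
          rw [hg', Real.norm_eq_abs, abs_mul, abs_mul, he,
            abs_of_nonneg (Real.rpow_nonneg hy0.le _)]
      _ ≤ (lam ^ k / Real.Gamma (α * k + α)) * ((k + 1 : ℝ) *
            ((t/2) ^ (α * k + (α - 2)) + (t+1) ^ (α * k + (α - 2)))) := by
          rw [habs_c k]
          apply mul_le_mul_of_nonneg_left _ (by positivity)
          exact mul_le_mul (hcoef k) hpowle (Real.rpow_nonneg hy0.le _) (by positivity)
      _ = u k := by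
          rw [hu_def, hsplit (t/2) ha k (α - 2), hsplit (t+1) hb k (α - 2)]
          simp only [mul_pow]
          ring
  have hg0 : Summable (fun k => g k t) := by
    apply Summable.of_norm_bounded
      ((summable_aux α hα0 (q := lam * t ^ α) (by positivity)).mul_left (t ^ (α - 1)))
    intro k
    rw [hg, Real.norm_eq_abs, abs_mul, habs_c k,
      abs_of_nonneg (Real.rpow_nonneg ht.le _)]
    have h1 : t ^ (α * k + α - 1) = (t ^ α) ^ k * t ^ (α - 1) := by
      have := hsplit t ht k (α - 1); rw [← this]; ring_nf
    rw [h1, mul_pow]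
    have hk1 : (1:ℝ) ≤ (k + 1 : ℝ) := by
      have := Nat.cast_nonneg (α := ℝ) k; linarith
    have base : lam ^ k / Real.Gamma (α * k + α) * ((t ^ α) ^ k * t ^ (α - 1))
        = t ^ (α - 1) * (1 * (lam ^ k * (t ^ α) ^ k) / Real.Gamma (α * k + α)) := by ring
    rw [base]
    gcongr
  have H := hasDerivAt_tsum_of_isPreconnected hu hopen hconn hderiv hbound hmem hg0 hmem
  have key : ∀ k : ℕ, (α * k + α - 1) / Real.Gamma (α * k + α)
      = 1 / Real.Gamma (α * k + (α - 1)) := by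
    intro k
    rcases eq_or_ne (α * k + α - 1) 0 with h0 | h0
    · rw [show α * (k:ℝ) + (α - 1) = α * k + α - 1 from by ring, h0, Real.Gamma_zero]
      simp [h0]
    · have hm1 : (-1:ℝ) < α * k + α - 1 := by
        have : (0:ℝ) < α * k + α := by positivity
        linarith
      have hΓx : Real.Gamma (α * k + α - 1) ≠ 0 := by
        apply Real.Gamma_ne_zero
        intro m
        match m with
        | 0 => simpa using h0
        | (m+1) =>
          intro heq
          rw [heq] at hm1
          push_cast at hm1
          have : (0:ℝ) ≤ m := Nat.cast_nonneg m
          linarith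
      rw [show α * (k:ℝ) + (α - 1) = α * k + α - 1 from by ring,
        show α * (k:ℝ) + α = (α * k + α - 1) + 1 from by ring,
        Real.Gamma_add_one h0]
      rw [add_sub_cancel_right, div_mul_eq_div_div, div_self h0]
  have hsum : (∑' k, g' k t) = t ^ (α - 2) * mittagLeffler α (α - 1) (-lam * t ^ α) := by
    rw [mittagLeffler, ← tsum_mul_left]
    apply tsum_congr
    intro k
    simp only [hg', hc]
    rw [show α * (k:ℝ) + α - 1 - 1 = α * k + (α - 2) from by ring,
      hsplit t ht k (α - 2), mul_pow]
    calc (-lam) ^ k / Real.Gamma (α * k + α) * ((α * k + α - 1) * ((t ^ α) ^ k * t ^ (α - 2)))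
        = ((α * k + α - 1) / Real.Gamma (α * k + α)) * ((-lam) ^ k * ((t ^ α) ^ k * t ^ (α - 2))) := by
          ring
      _ = (1 / Real.Gamma (α * k + (α - 1))) * ((-lam) ^ k * ((t ^ α) ^ k * t ^ (α - 2))) := by
          rw [key k]
      _ = t ^ (α - 2) * ((-lam) ^ k * (t ^ α) ^ k / Real.Gamma (α * k + (α - 1))) := by
          ring
  rw [hsum] at H
  apply H.congr_of_eventuallyEq
  have hIoi : Ioi (0:ℝ) ∈ nhds t := Ioi_mem_nhds ht
  filter_upwards [hIoi] with s hs
  have hs0 : (0:ℝ) < s := hs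
  rw [mittagLeffler, ← tsum_mul_left]
  apply tsum_congr
  intro k
  simp only [hg, hc]
  rw [show α * (k:ℝ) + α - 1 = α * k + (α - 1) from by ring,
    hsplit s hs0 k (α - 1), mul_pow]
  ring
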